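/- Let r ∈ ℂ and F ∈ A_r(Γ,v). The function ℂQ_F on ℍ defined by (𝒞Q_F)(z) = conj(Q_F(z̄)), with Q_F as above, is (2 - r̄)-harmonic on ℍ, and ξ_{2-r̄}(𝒞Q_F)(z) = 2^{r-1} e^{πi(r-1)/2} F(z). -/

import Mathlib

open Complex

noncomputable def mdenom (g : Matrix.SpecialLinearGroup (Fin 2) ℝ) (z : ℂ) : ℂ :=
  (g.1 1 0 : ℂ) * z + (g.1 1 1 : ℂ)

noncomputable def mact (g : Matrix.SpecialLinearGroup (Fin 2) ℝ) (z : ℂ) : ℂ :=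
  ((g.1 0 0 : ℂ) * z + (g.1 0 1 : ℂ)) / mdenom g z

/-- The integral `∫_{w₁}^{w₂} (z - t)^(r-2) F z dz` along the straight segment. -/
noncomputable def segInt (r : ℂ) (F : ℂ → ℂ) (w₁ w₂ t : ℂ) : ℂ :=
  ∫ s in (0:ℝ)..1,
    (w₂ - w₁) * ((w₁ + (s : ℂ) * (w₂ - w₁) - t) ^ (r - 2)) *
      F (w₁ + (s : ℂ) * (w₂ - w₁))

noncomputable def wderivBar (F : ℂ → ℂ) (z : ℂ) : ℂ :=
  (fderiv ℝ F z 1 + Complex.I * fderiv ℝ F z Complex.I) / 2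

noncomputable def wderiv (F : ℂ → ℂ) (z : ℂ) : ℂ :=
  (fderiv ℝ F z 1 - Complex.I * fderiv ℝ F z Complex.I) / 2

noncomputable def hlaplacian (r : ℂ) (F : ℂ → ℂ) (z : ℂ) : ℂ :=
  -4 * (z.im : ℂ) ^ 2 * wderiv (fun w => wderivBar F w) z +
    2 * Complex.I * r * (z.im : ℂ) * wderivBar F z

noncomputable def shadowOp (r : ℂ) (F : ℂ → ℂ) (z : ℂ) : ℂ :=
  2 * Complex.I * ((z.im : ℂ) ^ (starRingEnd ℂ r)) * (starRingEnd ℂ) (wderivBar F z)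

namespace CQF

open MeasureTheory Set Metric intervalIntegral

/-- The upper half plane as a subset of `ℂ`. -/
def UH : Set ℂ := {z : ℂ | 0 < z.im}

lemma UH_open : IsOpen UH := isOpen_lt continuous_const Complex.continuous_im

noncomputable def conjCLM : ℂ →L[ℝ] ℂ := Complex.conjCLE.toContinuousLinearMap

@[simp] lemma conjCLM_apply (z : ℂ) : conjCLM z = starRingEnd ℂ z := rfl

/-- extensionality for real-linear maps on `ℂ` by values at `1` and `I`. -/
lemma clm_ext {f g : ℂ →L[ℝ] ℂ} (h1 : f 1 = g 1) (hI : f I = g I) : f = g := by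
  ext z
  have hz : z.re • (1 : ℂ) + z.im • I = z := by
    rw [Complex.real_smul, Complex.real_smul, mul_one, Complex.re_add_im]
  rw [← hz]
  simp only [f.map_add, g.map_add, f.map_smul, g.map_smul, h1, hI]

noncomputable def ell (z₀ : ℂ) (w : ℂ) (s : ℝ) : ℂ := z₀ + (s : ℂ) * (w - z₀)

variable (r : ℂ) (F : ℂ → ℂ) (z₀ : ℂ)

noncomputable def fint (w : ℂ) (s : ℝ) : ℂ :=
  (w - z₀) * ((z₀ + (s : ℂ) * (w - z₀) - (starRingEnd ℂ) w) ^ (r - 2)) *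
    F (z₀ + (s : ℂ) * (w - z₀))

noncomputable def Aco (w : ℂ) (s : ℝ) : ℂ :=
  (ell z₀ w s - (starRingEnd ℂ) w) ^ (r - 2) * F (ell z₀ w s) +
    (s : ℂ) * ((r - 2) * (w - z₀) * (ell z₀ w s - (starRingEnd ℂ) w) ^ (r - 2 - 1) *
        F (ell z₀ w s) +
      (w - z₀) * (ell z₀ w s - (starRingEnd ℂ) w) ^ (r - 2) * deriv F (ell z₀ w s))

noncomputable def Bco (w : ℂ) (s : ℝ) : ℂ :=
  (r - 2) * (w - z₀) * (ell z₀ w s - (starRingEnd ℂ) w) ^ (r - 2 - 1) * F (ell z₀ w s)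

noncomputable def Dfi (w : ℂ) (s : ℝ) : ℂ →L[ℝ] ℂ :=
  Aco r F z₀ w s • ContinuousLinearMap.id ℝ ℂ - Bco r F z₀ w s • conjCLM

lemma ell_im_pos (hz₀ : 0 < z₀.im) {w : ℂ} (hw : 0 < w.im) {s : ℝ}
    (hs : s ∈ Icc (0:ℝ) 1) : 0 < (ell z₀ w s).im := by
  have h : (ell z₀ w s).im = z₀.im + s * (w.im - z₀.im) := by
    simp [ell, Complex.add_im, Complex.mul_im]
  rw [h]
  rcases eq_or_lt_of_le hs.1 with h0 | h0
  · simp [← h0]; exact hz₀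
  · nlinarith [mul_pos h0 hw, mul_nonneg (sub_nonneg.2 hs.2) hz₀.le]

lemma base_im_pos (hz₀ : 0 < z₀.im) {w : ℂ} (hw : 0 < w.im) {s : ℝ}
    (hs : s ∈ Icc (0:ℝ) 1) : 0 < (ell z₀ w s - (starRingEnd ℂ) w).im := by
  have := ell_im_pos z₀ hz₀ hw hs
  simp only [Complex.sub_im, Complex.conj_im]
  linarith

lemma base_slit (hz₀ : 0 < z₀.im) {w : ℂ} (hw : 0 < w.im) {s : ℝ}
    (hs : s ∈ Icc (0:ℝ) 1) : (ell z₀ w s - (starRingEnd ℂ) w) ∈ Complex.slitPlane :=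
  Complex.mem_slitPlane_iff.2 (Or.inr (ne_of_gt (base_im_pos z₀ hz₀ hw hs)))

lemma base_ne_zero (hz₀ : 0 < z₀.im) {w : ℂ} (hw : 0 < w.im) {s : ℝ}
    (hs : s ∈ Icc (0:ℝ) 1) : (ell z₀ w s - (starRingEnd ℂ) w) ≠ 0 :=
  Complex.slitPlane_ne_zero (base_slit z₀ hz₀ hw hs)

lemma cont_ell : Continuous (fun p : ℂ × ℝ => ell z₀ p.1 p.2) := by
  unfold ell; fun_prop

lemma cont_base : Continuous (fun p : ℂ × ℝ => ell z₀ p.1 p.2 - (starRingEnd ℂ) p.1) :=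
  (cont_ell z₀).sub (Complex.continuous_conj.comp continuous_fst)

lemma contOn_comp {G : ℂ → ℂ} (hG : ContinuousOn G UH) (hz₀ : 0 < z₀.im) :
    ContinuousOn (fun p : ℂ × ℝ => G (ell z₀ p.1 p.2)) (UH ×ˢ Icc 0 1) := by
  refine hG.comp (cont_ell z₀).continuousOn fun p hp => ?_
  exact ell_im_pos z₀ hz₀ hp.1 hp.2

lemma contOn_cpow (c : ℂ) (hz₀ : 0 < z₀.im) :
    ContinuousOn (fun p : ℂ × ℝ => (ell z₀ p.1 p.2 - (starRingEnd ℂ) p.1) ^ c)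
      (UH ×ˢ Icc 0 1) := by
  intro p hp
  exact (((cont_base z₀).continuousAt).cpow continuousAt_const
    (base_slit z₀ hz₀ hp.1 hp.2)).continuousWithinAt

variable {F} in
lemma derivF_contOn (hF : DifferentiableOn ℂ F UH) : ContinuousOn (deriv F) UH :=
  ((hF.analyticOnNhd UH_open).deriv).continuousOn

variable {F} in
lemma contOn_fint (hF : DifferentiableOn ℂ F UH) (hz₀ : 0 < z₀.im) :
    ContinuousOn (fun p : ℂ × ℝ => fint r F z₀ p.1 p.2) (UH ×ˢ Icc 0 1) := by
  have h1 : ContinuousOn (fun p : ℂ × ℝ => p.1 - z₀) (UH ×ˢ Icc 0 1) := by fun_prop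
  exact (h1.mul (contOn_cpow z₀ (r - 2) hz₀)).mul (contOn_comp z₀ hF.continuousOn hz₀)

variable {F} in
lemma contOn_Aco (hF : DifferentiableOn ℂ F UH) (hz₀ : 0 < z₀.im) :
    ContinuousOn (fun p : ℂ × ℝ => Aco r F z₀ p.1 p.2) (UH ×ˢ Icc 0 1) := by
  have h1 : ContinuousOn (fun p : ℂ × ℝ => p.1 - z₀) (UH ×ˢ Icc 0 1) := by fun_prop
  have h2 : ContinuousOn (fun p : ℂ × ℝ => ((p.2 : ℝ) : ℂ)) (UH ×ˢ Icc 0 1) := by fun_prop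
  exact ((contOn_cpow z₀ (r-2) hz₀).mul (contOn_comp z₀ hF.continuousOn hz₀)).add
    (h2.mul ((((continuousOn_const.mul h1).mul (contOn_cpow z₀ (r-2-1) hz₀)).mul
        (contOn_comp z₀ hF.continuousOn hz₀)).add
      ((h1.mul (contOn_cpow z₀ (r-2) hz₀)).mul (contOn_comp z₀ (derivF_contOn hF) hz₀))))

variable {F} in
lemma contOn_Bco (hF : DifferentiableOn ℂ F UH) (hz₀ : 0 < z₀.im) :
    ContinuousOn (fun p : ℂ × ℝ => Bco r F z₀ p.1 p.2) (UH ×ˢ Icc 0 1) := by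
  have h1 : ContinuousOn (fun p : ℂ × ℝ => p.1 - z₀) (UH ×ˢ Icc 0 1) := by fun_prop
  exact ((continuousOn_const.mul h1).mul (contOn_cpow z₀ (r-2-1) hz₀)).mul
    (contOn_comp z₀ hF.continuousOn hz₀)

variable {F} in
lemma contOn_Dfi (hF : DifferentiableOn ℂ F UH) (hz₀ : 0 < z₀.im) :
    ContinuousOn (fun p : ℂ × ℝ => Dfi r F z₀ p.1 p.2) (UH ×ˢ Icc 0 1) := by
  exact ((contOn_Aco r z₀ hF hz₀).smul continuousOn_const).sub
    ((contOn_Bco r z₀ hF hz₀).smul continuousOn_const)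

variable {F} in
lemma hasFDerivAt_fint (hF : DifferentiableOn ℂ F UH) (hz₀ : 0 < z₀.im)
    {w : ℂ} (hw : 0 < w.im) {s : ℝ} (hs : s ∈ Icc (0:ℝ) 1) :
    HasFDerivAt (fun w => fint r F z₀ w s) (Dfi r F z₀ w s) w := by
  have hWZ : HasFDerivAt (fun w : ℂ => w - z₀) (ContinuousLinearMap.id ℝ ℂ) w :=
    (hasFDerivAt_id w).sub_const z₀
  have hL : HasFDerivAt (fun w : ℂ => z₀ + (s : ℂ) * (w - z₀))
      ((s : ℂ) • ContinuousLinearMap.id ℝ ℂ) w := by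
    exact (hWZ.const_mul (s : ℂ)).const_add z₀
  have hconj : HasFDerivAt (fun w : ℂ => (starRingEnd ℂ) w) conjCLM w := conjCLM.hasFDerivAt
  have hbase : HasFDerivAt (fun w : ℂ => z₀ + (s : ℂ) * (w - z₀) - (starRingEnd ℂ) w)
      ((s : ℂ) • ContinuousLinearMap.id ℝ ℂ - conjCLM) w := hL.sub hconj
  have hslit : (z₀ + (s : ℂ) * (w - z₀) - (starRingEnd ℂ) w) ∈ Complex.slitPlane :=
    base_slit z₀ hz₀ hw hs
  have hpow := ((Complex.hasStrictDerivAt_cpow_const (c := r - 2)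
      hslit).hasDerivAt.hasFDerivAt.restrictScalars ℝ).comp w hbase
  have hFc : DifferentiableAt ℂ F (z₀ + (s : ℂ) * (w - z₀)) :=
    hF.differentiableAt (UH_open.mem_nhds (ell_im_pos z₀ hz₀ hw hs))
  have hFd := (hFc.hasDerivAt.hasFDerivAt.restrictScalars ℝ).comp w hL
  have total := (hWZ.mul hpow).mul hFd
  refine total.congr_fderiv ?_
  refine clm_ext ?_ ?_ <;>
    simp only [Dfi, Aco, Bco, ell, ContinuousLinearMap.add_apply,
      ContinuousLinearMap.coe_comp', Function.comp_apply,
      ContinuousLinearMap.coe_restrictScalars', ContinuousLinearMap.smulRight_apply,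
      ContinuousLinearMap.one_apply, ContinuousLinearMap.coe_smul', Pi.smul_apply,
      ContinuousLinearMap.id_apply, ContinuousLinearMap.sub_apply, conjCLM_apply,
      ContinuousLinearMap.toSpanSingleton_apply, Pi.mul_apply,
      smul_eq_mul, map_one, Complex.conj_I, mul_one] <;>
    ring

variable {F} in
lemma hasFDerivAt_H (hF : DifferentiableOn ℂ F UH) (hz₀ : 0 < z₀.im)
    {z : ℂ} (hz : 0 < z.im) :
    HasFDerivAt (fun w => ∫ s in (0:ℝ)..1, fint r F z₀ w s)
      (∫ s in (0:ℝ)..1, Dfi r F z₀ z s) z := by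
  set ε := z.im / 2 with hε
  have hεpos : 0 < ε := by positivity
  have hcb : ∀ w ∈ closedBall z ε, 0 < w.im := by
    intro w hw
    have h1 : |(w - z).im| ≤ ‖w - z‖ := Complex.abs_im_le_norm _
    have h2 : ‖w - z‖ ≤ ε := by
      rw [← Complex.dist_eq]; exact mem_closedBall.1 hw
    have h3 : |w.im - z.im| ≤ ε := by rw [← Complex.sub_im]; linarith
    have := abs_le.1 h3
    simp only [hε] at *
    linarith [this.1]
  have hKsub : closedBall z ε ×ˢ Icc (0:ℝ) 1 ⊆ UH ×ˢ Icc 0 1 := fun p hp =>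
    ⟨hcb p.1 hp.1, hp.2⟩
  obtain ⟨C, hC⟩ := ((isCompact_closedBall z ε).prod isCompact_Icc).exists_bound_of_continuousOn
    ((contOn_Dfi r z₀ hF hz₀).mono hKsub)
  have hslice : ∀ {α : Type} [inst : TopologicalSpace α] (g : ℂ × ℝ → α),
      ContinuousOn g (UH ×ˢ Icc 0 1) → ∀ {w : ℂ}, 0 < w.im →
      ContinuousOn (fun s : ℝ => g (w, s)) (Icc 0 1) := by
    intro α _ g hg w hw
    exact hg.comp (Continuous.continuousOn (by fun_prop)) fun s hs => ⟨hw, hs⟩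
  have hIoc : Set.uIoc (0:ℝ) 1 = Ioc (0:ℝ) 1 := uIoc_of_le zero_le_one
  have hIcc : uIcc (0:ℝ) 1 = Icc (0:ℝ) 1 := uIcc_of_le zero_le_one
  refine intervalIntegral.hasFDerivAt_integral_of_dominated_of_fderiv_le (𝕜 := ℝ)
    (s := ball z ε) (bound := fun _ => C) (ball_mem_nhds z hεpos) ?_ ?_ ?_ ?_ ?_ ?_
  · filter_upwards [ball_mem_nhds z hεpos] with w hw
    have := hslice _ (contOn_fint r z₀ hF hz₀) (hcb w (ball_subset_closedBall hw))
    rw [hIoc]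
    exact (this.mono Ioc_subset_Icc_self).aestronglyMeasurable measurableSet_Ioc
  · apply ContinuousOn.intervalIntegrable
    rw [hIcc]
    exact hslice _ (contOn_fint r z₀ hF hz₀) hz
  · rw [hIoc]
    exact ((hslice _ (contOn_Dfi r z₀ hF hz₀) hz).mono
      Ioc_subset_Icc_self).aestronglyMeasurable measurableSet_Ioc
  · refine Filter.Eventually.of_forall fun s hs w hw => ?_
    exact hC (w, s) ⟨ball_subset_closedBall hw, Ioc_subset_Icc_self (hIoc ▸ hs)⟩
  · exact intervalIntegrable_const
  · refine Filter.Eventually.of_forall fun s hs w hw => ?_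
    exact hasFDerivAt_fint r z₀ hF hz₀ (hcb w (ball_subset_closedBall hw))
      (Ioc_subset_Icc_self (hIoc ▸ hs))

lemma intInt_slice {E : Type*} [NormedAddCommGroup E] {g : ℂ × ℝ → E} (hg : ContinuousOn g (UH ×ˢ Icc 0 1)) {z : ℂ}
    (hz : 0 < z.im) : IntervalIntegrable (fun s => g (z, s)) volume 0 1 := by
  apply ContinuousOn.intervalIntegrable
  rw [uIcc_of_le zero_le_one]
  have hc : Continuous (fun s : ℝ => ((z, s) : ℂ × ℝ)) := continuous_const.prodMk continuous_id
  exact hg.comp hc.continuousOn fun s hs => ⟨hz, hs⟩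

variable {F} in
lemma intInt_Aco (hF : DifferentiableOn ℂ F UH) (hz₀ : 0 < z₀.im)
    {z : ℂ} (hz : 0 < z.im) : IntervalIntegrable (Aco r F z₀ z) volume 0 1 :=
  intInt_slice (contOn_Aco r z₀ hF hz₀) hz

variable {F} in
lemma intInt_Bco (hF : DifferentiableOn ℂ F UH) (hz₀ : 0 < z₀.im)
    {z : ℂ} (hz : 0 < z.im) : IntervalIntegrable (Bco r F z₀ z) volume 0 1 :=
  intInt_slice (contOn_Bco r z₀ hF hz₀) hz

variable {F} in
/-- FTC evaluation of the `Aco` integral. -/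
lemma integral_Aco (hF : DifferentiableOn ℂ F UH) (hz₀ : 0 < z₀.im)
    {z : ℂ} (hz : 0 < z.im) :
    (∫ s in (0:ℝ)..1, Aco r F z₀ z s) = (z - (starRingEnd ℂ) z) ^ (r - 2) * F z := by
  have key : ∀ s ∈ uIcc (0:ℝ) 1,
      HasDerivAt (fun s : ℝ => (s : ℂ) *
          ((ell z₀ z s - (starRingEnd ℂ) z) ^ (r - 2) * F (ell z₀ z s)))
        (Aco r F z₀ z s) s := by
    intro s hs
    rw [uIcc_of_le zero_le_one] at hs
    have h1 : HasDerivAt (fun s : ℝ => ((s : ℝ) : ℂ)) 1 s := by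
      exact Complex.ofRealCLM.hasDerivAt (x := s)
    have hL : HasDerivAt (fun s : ℝ => ell z₀ z s) (z - z₀) s := by
      have := (h1.mul_const (z - z₀)).const_add z₀
      simpa [ell] using this
    have hmem : 0 < (ell z₀ z s).im := ell_im_pos z₀ hz₀ hz hs
    have hFc : DifferentiableAt ℂ F (ell z₀ z s) :=
      hF.differentiableAt (UH_open.mem_nhds hmem)
    have hslit := base_slit z₀ hz₀ hz hs
    have hbase : HasDerivAt (fun t : ℂ => t - (starRingEnd ℂ) z) 1 (ell z₀ z s) :=
      (hasDerivAt_id _).sub_const _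
    have hpow := hbase.cpow_const (c := r - 2) hslit
    have hg := hpow.mul hFc.hasDerivAt
    have hcomp := (hg.hasFDerivAt.restrictScalars ℝ).comp_hasDerivAt s hL
    have htot := h1.mul hcomp
    refine htot.congr_deriv ?_
    simp only [Aco, ContinuousLinearMap.toSpanSingleton_apply, Pi.mul_apply, ContinuousLinearMap.coe_restrictScalars', Function.comp_apply,
      Function.comp, ContinuousLinearMap.smulRight_apply, ContinuousLinearMap.one_apply, smul_eq_mul,
      one_mul, mul_one]
    ring
  rw [intervalIntegral.integral_eq_sub_of_hasDerivAt key (intInt_Aco r z₀ hF hz₀ hz)]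
  simp [ell]

variable {F} in
/-- The key computation of `∂̄` of the conjugated period integral. -/
lemma wderivBar_CQF (hF : DifferentiableOn ℂ F UH) (hz₀ : 0 < z₀.im)
    {z : ℂ} (hz : 0 < z.im) :
    wderivBar (fun w => starRingEnd ℂ (segInt r F z₀ w (starRingEnd ℂ w))) z
      = starRingEnd ℂ ((2 * (z.im : ℂ) * I) ^ (r - 2) * F z) := by
  have hH := hasFDerivAt_H r z₀ hF hz₀ hz
  set L := ∫ s in (0:ℝ)..1, Dfi r F z₀ z s with hLdef
  have hG : HasFDerivAt (fun w => starRingEnd ℂ (segInt r F z₀ w (starRingEnd ℂ w)))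
      (conjCLM.comp L) z := conjCLM.hasFDerivAt.comp z hH
  have hInt : IntervalIntegrable (Dfi r F z₀ z) volume 0 1 :=
    intInt_slice (contOn_Dfi r z₀ hF hz₀) hz
  have hIA := intInt_Aco r z₀ hF hz₀ hz
  have hIB := intInt_Bco r z₀ hF hz₀ hz
  have hL1 : L 1 = (∫ s in (0:ℝ)..1, Aco r F z₀ z s) - ∫ s in (0:ℝ)..1, Bco r F z₀ z s := by
    rw [hLdef, ContinuousLinearMap.intervalIntegral_apply hInt,
      ← intervalIntegral.integral_sub hIA hIB]
    apply intervalIntegral.integral_congr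
    intro s hs
    simp [Dfi]
  have hLI : L I = ((∫ s in (0:ℝ)..1, Aco r F z₀ z s) +
      ∫ s in (0:ℝ)..1, Bco r F z₀ z s) * I := by
    rw [hLdef, ContinuousLinearMap.intervalIntegral_apply hInt,
      ← intervalIntegral.integral_add hIA hIB, ← intervalIntegral.integral_mul_const]
    apply intervalIntegral.integral_congr
    intro s hs
    simp [Dfi, Complex.conj_I]
    ring
  unfold wderivBar
  rw [hG.fderiv]
  rw [ContinuousLinearMap.comp_apply, ContinuousLinearMap.comp_apply, conjCLM_apply,
    conjCLM_apply, hL1, hLI, integral_Aco r z₀ hF hz₀ hz, Complex.sub_conj]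
  push_cast
  simp only [map_sub, map_add, map_mul, Complex.conj_I]
  ring_nf
  simp only [Complex.I_sq]
  ring

end CQF

/-- for `F ∈ A_r(Γ,v)` the function `(𝒞Q_F)(z) = conj (Q_F z̄)` on the
upper half-plane (where `Q_F t = ∫_{z₀}^{t̄} (z-t)^(r-2) F z dz`, so
`(𝒞Q_F)(z) = conj (∫_{z₀}^{z} (τ - z̄)^(r-2) F τ dτ)`) is `(2-r̄)`-harmonic, and
`ξ_{2-r̄}(𝒞Q_F)(z) = 2^(r-1) e^(πi(r-1)/2) F z`. -/
theorem CQF_harmonic_and_shadow (r : ℂ)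
    (Γ : Subgroup (Matrix.SpecialLinearGroup (Fin 2) ℝ))
    (v : Matrix.SpecialLinearGroup (Fin 2) ℝ → ℂ)
    (F : ℂ → ℂ) (hF : DifferentiableOn ℂ F {z : ℂ | 0 < z.im})
    (hauto : ∀ γ ∈ Γ, ∀ z : ℂ, 0 < z.im →
        F (mact γ z) = v γ * mdenom γ z ^ r * F z)
    (z₀ : ℂ) (hz₀ : 0 < z₀.im) :
    (∀ z : ℂ, 0 < z.im →
        hlaplacian (2 - starRingEnd ℂ r)
          (fun w => starRingEnd ℂ (segInt r F z₀ w (starRingEnd ℂ w))) z = 0) ∧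
    (∀ z : ℂ, 0 < z.im →
        shadowOp (2 - starRingEnd ℂ r)
            (fun w => starRingEnd ℂ (segInt r F z₀ w (starRingEnd ℂ w))) z =
          (2 : ℂ) ^ (r - 1) * Complex.exp ((Real.pi : ℂ) * Complex.I * (r - 1) / 2) * F z) := by
  have hF' : DifferentiableOn ℂ F CQF.UH := hF
  constructor
  · -- harmonicity
    intro z hz
    have hweq : (fun w => wderivBar
        (fun w' => starRingEnd ℂ (segInt r F z₀ w' (starRingEnd ℂ w'))) w)
        =ᶠ[nhds z] (fun w => starRingEnd ℂ ((2 * (w.im : ℂ) * I) ^ (r - 2) * F w)) := by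
      filter_upwards [CQF.UH_open.mem_nhds hz] with w hw
      exact CQF.wderivBar_CQF r z₀ hF' hz₀ hw
    unfold hlaplacian wderiv
    rw [CQF.wderivBar_CQF r z₀ hF' hz₀ hz, hweq.fderiv_eq]
    have hbim : (2 * ((z.im : ℝ) : ℂ) * I).im = 2 * z.im := by
      simp [Complex.mul_im, Complex.mul_re]
    have hslit : (2 * ((z.im : ℝ) : ℂ) * I) ∈ Complex.slitPlane :=
      Complex.mem_slitPlane_iff.2 (Or.inr (by rw [hbim]; positivity))
    have hbne : (2 * ((z.im : ℝ) : ℂ) * I) ≠ 0 := Complex.slitPlane_ne_zero hslit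
    have hinner : HasFDerivAt (fun w : ℂ => 2 * (w.im : ℂ) * I)
        ((2 * I) • (Complex.ofRealCLM.comp Complex.imCLM)) z := by
      have he : (fun w : ℂ => 2 * (w.im : ℂ) * I)
          = fun w => ((2 * I) • (Complex.ofRealCLM.comp Complex.imCLM)) w := by
        funext w
        simp only [ContinuousLinearMap.coe_smul', Pi.smul_apply,
          ContinuousLinearMap.coe_comp', Function.comp_apply, Complex.ofRealCLM_apply,
          Complex.imCLM_apply, smul_eq_mul]
        ring
      rw [he]
      exact ((2 * I) • (Complex.ofRealCLM.comp Complex.imCLM)).hasFDerivAt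
    have hpow := ((Complex.hasStrictDerivAt_cpow_const (c := r - 2)
        hslit).hasDerivAt.hasFDerivAt.restrictScalars ℝ).comp z hinner
    have hFz := ((hF'.differentiableAt
      (CQF.UH_open.mem_nhds hz)).hasDerivAt.hasFDerivAt.restrictScalars ℝ)
    have hψ := hpow.mul hFz
    have hφ : HasFDerivAt
        (fun w : ℂ => starRingEnd ℂ ((2 * (w.im : ℂ) * I) ^ (r - 2) * F w)) _ z :=
      CQF.conjCLM.hasFDerivAt.comp z hψ
    rw [hφ.fderiv]
    have hsp : r - 2 = (r - 2 - 1) + 1 := by ring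
    have hsplit : (2 * ((z.im : ℝ) : ℂ) * I) ^ (r - 2)
        = (2 * ((z.im : ℝ) : ℂ) * I) ^ (r - 2 - 1) * (2 * ((z.im : ℝ) : ℂ) * I) := by
      conv_lhs => rw [hsp]
      rw [Complex.cpow_add _ _ hbne, Complex.cpow_one]
    rw [hsplit]
    simp only [ContinuousLinearMap.comp_apply, ContinuousLinearMap.add_apply,
      ContinuousLinearMap.coe_comp', Function.comp_apply,
      ContinuousLinearMap.coe_restrictScalars', ContinuousLinearMap.smulRight_apply,
      ContinuousLinearMap.one_apply, ContinuousLinearMap.coe_smul', Pi.smul_apply,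
      ContinuousLinearMap.id_apply, CQF.conjCLM_apply, Complex.ofRealCLM_apply,
      Complex.imCLM_apply, Complex.one_im, Complex.I_im, smul_eq_mul,
      Complex.ofReal_one, Complex.ofReal_zero, Complex.one_im, mul_one, mul_zero,
      zero_mul, map_one, map_zero, map_mul, map_add, map_sub, map_ofNat, Complex.conj_I,
      Complex.conj_ofReal, Complex.conj_conj, ContinuousLinearMap.toSpanSingleton_apply]
    ring_nf
    simp only [Complex.I_sq]
    ring
  · -- shadow
    intro z hz
    unfold shadowOp
    rw [CQF.wderivBar_CQF r z₀ hF' hz₀ hz, Complex.conj_conj]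
    have hconj2 : (starRingEnd ℂ) (2 - (starRingEnd ℂ) r) = 2 - r := by
      simp [map_ofNat]
    rw [hconj2]
    have hy : 0 < z.im := hz
    have hyne : ((z.im : ℝ) : ℂ) ≠ 0 := Complex.ofReal_ne_zero.2 hy.ne'
    have h2y : (0:ℝ) < 2 * z.im := by linarith
    have e1 : ((z.im : ℝ) : ℂ) ^ (2 - r) = Complex.exp ((Real.log z.im : ℂ) * (2 - r)) := by
      rw [Complex.cpow_def_of_ne_zero hyne, Complex.ofReal_log hy.le]
    have ebase : (2 * ((z.im : ℝ) : ℂ) * I) = ((2 * z.im : ℝ) : ℂ) * I := by push_cast; ring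
    have hbne : ((2 * z.im : ℝ) : ℂ) * I ≠ 0 :=
      mul_ne_zero (Complex.ofReal_ne_zero.2 h2y.ne') Complex.I_ne_zero
    have hlogb : Complex.log (((2 * z.im : ℝ) : ℂ) * I)
        = ((Real.log 2 + Real.log z.im : ℝ) : ℂ) + (Real.pi : ℂ) / 2 * I := by
      rw [Complex.log_ofReal_mul h2y Complex.I_ne_zero, Complex.log_I,
        Real.log_mul two_ne_zero hy.ne']
    have e2 : (2 * ((z.im : ℝ) : ℂ) * I) ^ (r - 2)
        = Complex.exp ((((Real.log 2 + Real.log z.im : ℝ) : ℂ)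
            + (Real.pi : ℂ) / 2 * I) * (r - 2)) := by
      rw [ebase, Complex.cpow_def_of_ne_zero hbne, hlogb]
    have e3 : (2:ℂ) ^ (r - 1) = Complex.exp ((Real.log 2 : ℂ) * (r - 1)) := by
      rw [show (2:ℂ) = ((2:ℝ):ℂ) by norm_num, Complex.cpow_def_of_ne_zero (by norm_num),
        Complex.ofReal_log (by norm_num : (0:ℝ) ≤ 2)]
    have e4 : (2:ℂ) * I = Complex.exp ((Real.log 2 : ℂ) + (Real.pi : ℂ)/2 * I) := by
      rw [Complex.exp_add, Complex.exp_mul_I]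
      rw [show ((Real.pi : ℂ)/2) = ((Real.pi/2 : ℝ) : ℂ) by push_cast; ring]
      rw [← Complex.ofReal_cos, ← Complex.ofReal_sin, Real.cos_pi_div_two,
        Real.sin_pi_div_two, ← Complex.ofReal_exp, Real.exp_log two_pos]
      norm_num
    rw [e1, e2, e3, e4]
    have hcomb : ∀ a b c d : ℂ,
        Complex.exp a * Complex.exp b * (Complex.exp c * d) = Complex.exp (a + b + c) * d := by
      intro a b c d
      rw [Complex.exp_add, Complex.exp_add]; ring
    have hcomb2 : ∀ a b d : ℂ,
        Complex.exp a * Complex.exp b * d = Complex.exp (a + b) * d := by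
      intro a b d
      rw [Complex.exp_add]
    rw [hcomb]
    rw [show (Real.pi : ℂ) * Complex.I * (r - 1) / 2
        = ((Real.pi : ℂ)/2 * I) * (r - 1) from by ring]
    rw [hcomb2]
    congr 2
    push_cast
    ring
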